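/- arXiv:2205.00401 — 2 statements merged into one kernel-verified Lean document; each statement's English description precedes it below -/
import Mathlib

section
/- Let V : [0,∞) → [0,∞) be a continuous decreasing function and n > 1 a real number. Then ∫₀^∞ V(t) t^{1/(n-1)} dt ≤ ((n-1)/n) (∫₀^∞ V(t)^{(n-1)/n} dt)^{n/(n-1)}. -/
open MeasureTheory Set

open Filter Topology in
/-- **Hardy–Littlewood–Pólya inequality.** If `V : [0,∞) → [0,∞)` is continuous and
decreasing and `n > 1`, then
`∫₀^∞ V(t) t^{1/(n-1)} dt ≤ ((n-1)/n) (∫₀^∞ V(t)^{(n-1)/n} dt)^{n/(n-1)}`. -/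
theorem stmt_0 (V : ℝ → ℝ) (hVc : Continuous V) (hVanti : AntitoneOn V (Set.Ici 0))
    (hVnn : ∀ t, 0 ≤ t → 0 ≤ V t) (n : ℝ) (hn : 1 < n) :
    ∫⁻ t in Set.Ioi (0 : ℝ), ENNReal.ofReal (V t * t ^ (1 / (n - 1))) ≤
      ENNReal.ofReal ((n - 1) / n) *
        (∫⁻ t in Set.Ioi (0 : ℝ), ENNReal.ofReal (V t ^ ((n - 1) / n))) ^ (n / (n - 1)) := by
  have hn1 : (0:ℝ) < n - 1 := by linarith
  have hn0 : (0:ℝ) < n := by linarith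
  set α : ℝ := 1 / (n - 1) with hα_def
  set p : ℝ := (n - 1) / n with hp_def
  set q : ℝ := n / (n - 1) with hq_def
  have hα : 0 < α := by positivity
  have hp : 0 < p := by positivity
  have hq0 : 0 < q := by positivity
  have hq1 : 1 < q := by rw [hq_def, lt_div_iff₀ hn1]; linarith
  have hqα : q = 1 + α := by rw [hq_def, hα_def]; field_simp; ring
  have hpq : p * q = 1 := by rw [hp_def, hq_def]; field_simp
  set W : ℝ → ℝ := fun t => V t ^ p with hW_def
  have hWc : Continuous W := hVc.rpow_const fun x => Or.inr hp.le
  have hWnn : ∀ t, 0 ≤ t → 0 ≤ W t := fun t ht => Real.rpow_nonneg (hVnn t ht) p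
  set I := ∫⁻ t in Set.Ioi (0:ℝ), ENNReal.ofReal (W t) with hI_def
  rcases eq_or_ne I ⊤ with hI | hI
  · rw [hI, ENNReal.top_rpow_of_pos hq0, ENNReal.mul_top]
    · exact le_top
    · exact (ENNReal.ofReal_pos.mpr hp).ne'
  -- finite case
  have hW0ae : 0 ≤ᵐ[volume.restrict (Set.Ioi (0:ℝ))] W :=
    (ae_restrict_iff' measurableSet_Ioi).2 (ae_of_all _ fun t ht => hWnn t (le_of_lt ht))
  have hWint : IntegrableOn W (Set.Ioi (0:ℝ)) := by
    refine ⟨hWc.aestronglyMeasurable.restrict, ?_⟩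
    rw [hasFiniteIntegral_iff_ofReal hW0ae]
    exact hI.lt_top
  set Ireal := ∫ t in Set.Ioi (0:ℝ), W t with hIreal_def
  have hIrnn : 0 ≤ Ireal := integral_nonneg_of_ae hW0ae
  have hIr : ENNReal.ofReal Ireal = I := ofReal_integral_eq_lintegral_ofReal hWint hW0ae
  set F : ℝ → ℝ := fun T => ∫ t in (0:ℝ)..T, W t with hF_def
  have hFderiv : ∀ t : ℝ, HasDerivAt F (W t) t := fun t =>
    intervalIntegral.integral_hasDerivAt_right (hWc.intervalIntegrable _ _)
      (hWc.aestronglyMeasurable.stronglyMeasurableAtFilter) hWc.continuousAt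
  have hFcont : Continuous F := by
    have : Differentiable ℝ F := fun t => (hFderiv t).differentiableAt
    exact this.continuous
  have hFnn : ∀ t, 0 ≤ t → 0 ≤ F t := fun t ht =>
    intervalIntegral.integral_nonneg ht fun s hs => hWnn s hs.1
  have hFtendsto : Tendsto F atTop (𝓝 Ireal) :=
    intervalIntegral_tendsto_integral_Ioi 0 hWint tendsto_id
  set G : ℝ → ℝ := fun t => F t ^ q / q with hG_def
  set g : ℝ → ℝ := fun t => W t * F t ^ α with hg_def
  have hGderiv : ∀ t : ℝ, HasDerivAt G (g t) t := by
    intro t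
    have h1 : HasDerivAt (fun x : ℝ => x ^ q) (q * F t ^ (q - 1)) (F t) :=
      Real.hasDerivAt_rpow_const (Or.inr hq1.le)
    have h2 : HasDerivAt (fun t => F t ^ q) (q * F t ^ (q - 1) * W t) t :=
      h1.comp t (hFderiv t)
    have h3 := h2.div_const q
    have heq : q * F t ^ (q - 1) * W t / q = g t := by
      have hq' : q - 1 = α := by rw [hqα]; ring
      rw [hq', hg_def]
      field_simp
    rwa [heq] at h3
  have hGtendsto : Tendsto G atTop (𝓝 (Ireal ^ q / q)) := by
    have hc : ContinuousAt (fun x : ℝ => x ^ q / q) Ireal :=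
      ((Real.continuousAt_rpow_const Ireal q (Or.inr hq0.le))).div_const q
    exact hc.tendsto.comp hFtendsto
  have hgnn : ∀ x ∈ Set.Ioi (0:ℝ), 0 ≤ g x := fun x hx =>
    mul_nonneg (hWnn x hx.out.le) (Real.rpow_nonneg (hFnn x hx.out.le) α)
  have hgc : Continuous g := hWc.mul (hFcont.rpow_const fun x => Or.inr hα.le)
  have hgint : IntegrableOn g (Set.Ioi (0:ℝ)) :=
    integrableOn_Ioi_deriv_of_nonneg' (fun x _ => hGderiv x) hgnn hGtendsto
  have hg0ae : 0 ≤ᵐ[volume.restrict (Set.Ioi (0:ℝ))] g :=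
    (ae_restrict_iff' measurableSet_Ioi).2 (ae_of_all _ hgnn)
  have hgval : ∫ x in Set.Ioi (0:ℝ), g x = Ireal ^ q / q := by
    have h := integral_Ioi_of_hasDerivAt_of_nonneg' (g := G) (fun x _ => hGderiv x) hgnn hGtendsto
    rw [h]
    have hF0 : F 0 = 0 := intervalIntegral.integral_same
    have hG0 : G 0 = 0 := by
      rw [hG_def]; simp only [hF0]; rw [Real.zero_rpow (by positivity : q ≠ 0)]; simp
    rw [hG0, sub_zero]
  -- pointwise bound
  have hpt : ∀ t ∈ Set.Ioi (0:ℝ), V t * t ^ α ≤ g t := by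
    intro t ht
    have ht0 : (0:ℝ) ≤ t := ht.out.le
    have hWtnn : 0 ≤ W t := hWnn t ht0
    have h1 : W t * t ≤ F t := by
      have hc : W t * t = ∫ s in (0:ℝ)..t, W t := by
        rw [intervalIntegral.integral_const, smul_eq_mul]; ring
      rw [hc]
      show (∫ s in (0:ℝ)..t, W t) ≤ ∫ s in (0:ℝ)..t, W s
      refine intervalIntegral.integral_mono_on ht0 (intervalIntegrable_const)
        (hWc.intervalIntegrable _ _) fun s hs => ?_
      exact Real.rpow_le_rpow (hVnn t ht0) (hVanti hs.1 ht0 hs.2) hp.le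
    have h2 : (W t * t) ^ α ≤ F t ^ α :=
      Real.rpow_le_rpow (mul_nonneg hWtnn ht0) h1 hα.le
    have h3 : V t * t ^ α = W t * (W t * t) ^ α := by
      rw [Real.mul_rpow hWtnn ht0]
      have hr : W t * (W t ^ α * t ^ α) = (W t * W t ^ α) * t ^ α := by ring
      rw [hr]
      congr 1
      have h4 : W t * W t ^ α = W t ^ q := by
        rw [hqα, Real.rpow_add' hWtnn (by rw [← hqα]; positivity), Real.rpow_one]
      rw [h4, hW_def]
      show V t = (V t ^ p) ^ q
      rw [← Real.rpow_mul (hVnn t ht0), hpq, Real.rpow_one]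
    rw [h3]
    exact mul_le_mul_of_nonneg_left h2 hWtnn
  -- assemble
  calc ∫⁻ t in Set.Ioi (0:ℝ), ENNReal.ofReal (V t * t ^ α)
      ≤ ∫⁻ t in Set.Ioi (0:ℝ), ENNReal.ofReal (g t) :=
        setLIntegral_mono (ENNReal.measurable_ofReal.comp hgc.measurable)
          fun x hx => ENNReal.ofReal_le_ofReal (hpt x hx)
    _ = ENNReal.ofReal (Ireal ^ q / q) := by
        rw [← ofReal_integral_eq_lintegral_ofReal hgint hg0ae, hgval]
    _ = ENNReal.ofReal p * I ^ q := by
        rw [← hIr, ENNReal.ofReal_rpow_of_nonneg hIrnn hq0.le, ← ENNReal.ofReal_mul hp.le]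
        congr 1
        rw [div_eq_iff hq0.ne']
        calc Ireal ^ q = (p * q) * Ireal ^ q := by rw [hpq, one_mul]
          _ = p * Ireal ^ q * q := by ring
end

section
/- Let S ⊂ B̄₁ ⊂ ℝ^d be compact with H^{d-p}(S) = 0 for some 1 ≤ p < d, and let f ∈ W^{1,p}(B₁) ∩ L^∞(B₁). Then there exists a sequence of Lipschitz cutoff functions η_k : ℝ^d → [0,1] with η_k ≡ 0 in a neighborhood of S, η_k ≡ 1 outside a 2ε_k-neighborhood of S with ε_k → 0, and such that f η_k → f in W^{1,p}(B₁). In particular, sets of zero (d-p)-Hausdorff measure are removable for W^{1,p} ∩ L^∞ approximation. -/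
open MeasureTheory Metric Set Filter Topology ENNReal NNReal

set_option maxHeartbeats 1000000

variable {d : ℕ}

local notation "X" => EuclideanSpace ℝ (Fin d)

lemma rpow_max_le {a b q : ℝ} (ha : 0 ≤ a) (hb : 0 ≤ b) :
    max a b ^ q ≤ a ^ q + b ^ q := by
  rcases max_cases a b with ⟨h, _⟩ | ⟨h, _⟩
  · rw [h]; nlinarith [Real.rpow_nonneg hb q]
  · rw [h]; nlinarith [Real.rpow_nonneg ha q]

lemma exists_cover (q : ℝ) (hq : 0 < q) (S : Set X) (hScomp : IsCompact S)
    (hS0 : MeasureTheory.Measure.hausdorffMeasure q S = 0) {r δ : ℝ} (hr : 0 < r) (hδ : 0 < δ) :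
    ∃ (n : ℕ) (y : Fin n → X) (s : Fin n → ℝ),
      (∀ i, 0 < s i) ∧ (∀ i, s i < r) ∧ (∀ i, y i ∈ S) ∧
      S ⊆ ⋃ i, ball (y i) (s i) ∧ ∑ i, s i ^ q ≤ δ := by
  classical
  rcases S.eq_empty_or_nonempty with hS | ⟨x0, hx0⟩
  · exact ⟨0, Fin.elim0, Fin.elim0, fun i => i.elim0, fun i => i.elim0, fun i => i.elim0,
      by simp [hS], by simp [hδ.le]⟩
  -- extract a countable cover with small diameters and small sum
  set e : ℝ≥0∞ := ENNReal.ofReal (δ / (2 * 2 ^ q)) with he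
  have h2q : (0:ℝ) < 2 ^ q := Real.rpow_pos_of_pos (by norm_num) q
  have hepos : 0 < e := ENNReal.ofReal_pos.2 (by positivity)
  have hr4 : (0:ℝ≥0∞) < ENNReal.ofReal (r/4) := ENNReal.ofReal_pos.2 (by positivity)
  have hinf : (⨅ (t : ℕ → Set X) (_ : S ⊆ ⋃ n, t n)
      (_ : ∀ n, EMetric.diam (t n) ≤ ENNReal.ofReal (r/4)),
        ∑' n, ⨆ _ : (t n).Nonempty, EMetric.diam (t n) ^ q) = 0 := by
    refine le_antisymm ?_ zero_le
    have hle := le_iSup₂ (f := fun (r' : ℝ≥0∞) (_ : 0 < r') =>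
      ⨅ (t : ℕ → Set X) (_ : S ⊆ ⋃ n, t n) (_ : ∀ n, EMetric.diam (t n) ≤ r'),
        ∑' n, ⨆ _ : (t n).Nonempty, EMetric.diam (t n) ^ q) (ENNReal.ofReal (r/4)) hr4
    erw [← MeasureTheory.Measure.hausdorffMeasure_apply, hS0] at hle
    exact hle
  have hlt : (⨅ (t : ℕ → Set X) (_ : S ⊆ ⋃ n, t n)
      (_ : ∀ n, EMetric.diam (t n) ≤ ENNReal.ofReal (r/4)),
        ∑' n, ⨆ _ : (t n).Nonempty, EMetric.diam (t n) ^ q) < e := by rw [hinf]; exact hepos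
  rw [iInf_lt_iff] at hlt
  obtain ⟨t, hlt⟩ := hlt
  rw [iInf_lt_iff] at hlt
  obtain ⟨htcov, hlt⟩ := hlt
  rw [iInf_lt_iff] at hlt
  obtain ⟨htdiam, htsum⟩ := hlt
  -- radii
  set ρ : ℝ := min ((r/4) ^ q) (δ / (4 * 2 ^ q)) with hρ
  have hρpos : 0 < ρ := lt_min (Real.rpow_pos_of_pos (by positivity) q) (by positivity)
  set σ : ℕ → ℝ := fun n => (ρ * (1/2) ^ n) ^ (1/q) with hσ
  have hσpos : ∀ n, 0 < σ n := fun n => Real.rpow_pos_of_pos (by positivity) _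
  have hσq : ∀ n, σ n ^ q = ρ * (1/2) ^ n := by
    intro n
    simp only [hσ]
    rw [← Real.rpow_mul (by positivity), one_div_mul_cancel hq.ne', Real.rpow_one]
  have hσle : ∀ n, σ n ≤ r / 4 := by
    intro n
    have h1 : σ n ^ q ≤ (r/4) ^ q := by
      rw [hσq]
      calc ρ * (1/2) ^ n ≤ ρ * 1 := by
            have : ((1:ℝ)/2) ^ n ≤ 1 := pow_le_one₀ (by norm_num) (by norm_num)
            nlinarith
        _ = ρ := mul_one ρ
        _ ≤ (r/4) ^ q := min_le_left _ _
    by_contra hcon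
    push_neg at hcon
    exact absurd h1 (not_le.2 (Real.rpow_lt_rpow (by positivity) hcon hq))
  set D : ℕ → ℝ := fun n => (EMetric.diam (t n)).toReal with hD
  have hDne : ∀ n, EMetric.diam (t n) ≠ ⊤ := fun n =>
    ne_top_of_le_ne_top (by simp) (htdiam n)
  have hDle : ∀ n, D n ≤ r / 4 := by
    intro n
    have := ENNReal.toReal_mono (by simp) (htdiam n)
    rwa [ENNReal.toReal_ofReal (by positivity)] at this
  have hDnonneg : ∀ n, 0 ≤ D n := fun n => ENNReal.toReal_nonneg
  set s : ℕ → ℝ := fun n => 2 * max (D n) (σ n) with hs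
  have hspos : ∀ n, 0 < s n := fun n => by
    have := hσpos n; have := hDnonneg n
    simp only [hs]; positivity
  have hsr : ∀ n, s n < r := by
    intro n
    have : max (D n) (σ n) ≤ r/4 := max_le (hDle n) (hσle n)
    simp only [hs]; linarith
  set y : ℕ → X := fun n => if h : (t n ∩ S).Nonempty then h.choose else x0 with hy
  have hyS : ∀ n, y n ∈ S := by
    intro n
    by_cases h : (t n ∩ S).Nonempty
    · simp only [hy, dif_pos h]
      exact h.choose_spec.2
    · simp only [hy, dif_neg h]
      exact hx0
  have hcov : S ⊆ ⋃ n, ball (y n) (s n) := by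
    intro x hx
    obtain ⟨n, hn⟩ := Set.mem_iUnion.1 (htcov hx)
    have hne : (t n ∩ S).Nonempty := ⟨x, hn, hx⟩
    have hyn : y n ∈ t n := by
      simp only [hy, dif_pos hne]; exact hne.choose_spec.1
    refine Set.mem_iUnion.2 ⟨n, ?_⟩
    have hdist : dist x (y n) ≤ D n := by
      have h1 : edist x (y n) ≤ EMetric.diam (t n) := EMetric.edist_le_diam_of_mem hn hyn
      have := ENNReal.toReal_mono (hDne n) h1
      rwa [← dist_edist] at this
    have : D n < s n := by
      have h1 : s n = max (D n) (σ n) + max (D n) (σ n) := by simp only [hs]; ring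
      have h2 : D n ≤ max (D n) (σ n) := le_max_left _ _
      have h3 : 0 < max (D n) (σ n) := lt_of_lt_of_le (hσpos n) (le_max_right _ _)
      linarith
    exact mem_ball.2 (lt_of_le_of_lt hdist this)
  -- finite subcover
  obtain ⟨F, hF⟩ := hScomp.elim_finite_subcover (fun n => ball (y n) (s n))
    (fun n => isOpen_ball) hcov
  -- sum estimate over F
  have hsum : ∑ n ∈ F, s n ^ q ≤ δ := by
    have hterm : ∀ n, s n ^ q ≤ 2 ^ q * (D n ^ q + σ n ^ q) := by
      intro n
      have h1 : s n ^ q = 2 ^ q * max (D n) (σ n) ^ q := by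
        rw [hs]
        exact Real.mul_rpow (by norm_num) (le_max_of_le_right (hσpos n).le)
      rw [h1]
      have := rpow_max_le (q := q) (hDnonneg n) (hσpos n).le
      nlinarith
    have hsum1 : ∑ n ∈ F, D n ^ q ≤ δ / (2 * 2 ^ q) := by
      have hterm1 : ∀ n, D n ^ q = ((EMetric.diam (t n)) ^ q).toReal := fun n =>
        ENNReal.toReal_rpow _ _
      have hle2 : ∀ n, (EMetric.diam (t n)) ^ q ≤
          ⨆ _ : (t n).Nonempty, EMetric.diam (t n) ^ q := by
        intro n
        rcases (t n).eq_empty_or_nonempty with h | h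
        · simp [h, EMetric.diam_empty, ENNReal.zero_rpow_of_pos hq]; exact Or.inl ⟨Metric.ediam_empty, hq⟩
        · simp [h]
      calc ∑ n ∈ F, D n ^ q = (∑ n ∈ F, (EMetric.diam (t n)) ^ q).toReal := by
            rw [ENNReal.toReal_sum]
            · exact Finset.sum_congr rfl fun n _ => hterm1 n
            · intro n _
              exact (ENNReal.rpow_lt_top_of_nonneg hq.le (hDne n)).ne
        _ ≤ (∑' n, ⨆ _ : (t n).Nonempty, EMetric.diam (t n) ^ q).toReal := by
            apply ENNReal.toReal_mono (ne_top_of_lt (lt_of_lt_of_le htsum (le_top)))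
            · exact le_trans (Finset.sum_le_sum fun n _ => hle2 n) (ENNReal.sum_le_tsum F)
        _ ≤ e.toReal := ENNReal.toReal_mono (by simp [he]) htsum.le
        _ = δ / (2 * 2 ^ q) := ENNReal.toReal_ofReal (by positivity)
    have hsum2 : ∑ n ∈ F, σ n ^ q ≤ 2 * ρ := by
      have : ∀ n, σ n ^ q = ρ * (1/2) ^ n := hσq
      calc ∑ n ∈ F, σ n ^ q = ρ * ∑ n ∈ F, ((1:ℝ)/2) ^ n := by
            rw [Finset.mul_sum]; exact Finset.sum_congr rfl fun n _ => hσq n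
        _ ≤ ρ * 2 := by
            have h1 : ∑ n ∈ F, ((1:ℝ)/2) ^ n ≤ ∑' n, ((1:ℝ)/2) ^ n :=
              Summable.sum_le_tsum F (fun n _ => by positivity) summable_geometric_two
            rw [tsum_geometric_two] at h1
            nlinarith
        _ = 2 * ρ := by ring
    have hρ2 : ρ ≤ δ / (4 * 2 ^ q) := min_le_right _ _
    calc ∑ n ∈ F, s n ^ q ≤ ∑ n ∈ F, 2 ^ q * (D n ^ q + σ n ^ q) :=
          Finset.sum_le_sum fun n _ => hterm n
      _ = 2 ^ q * (∑ n ∈ F, D n ^ q + ∑ n ∈ F, σ n ^ q) := by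
          rw [← Finset.sum_add_distrib, ← Finset.mul_sum]
      _ ≤ 2 ^ q * (δ / (2 * 2 ^ q) + 2 * ρ) := by nlinarith
      _ ≤ 2 ^ q * (δ / (2 * 2 ^ q) + 2 * (δ / (4 * 2 ^ q))) := by nlinarith
      _ = δ := by field_simp; ring
  -- reindex by Fin F.card
  refine ⟨F.card, fun i => y (F.equivFin.symm i), fun i => s (F.equivFin.symm i),
    fun i => hspos _, fun i => hsr _, fun i => hyS _, ?_, ?_⟩
  · intro x hx
    obtain ⟨n, hn⟩ := Set.mem_iUnion₂.1 (hF hx)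
    obtain ⟨hnF, hxball⟩ := hn
    exact Set.mem_iUnion.2 ⟨F.equivFin ⟨n, hnF⟩, by simpa using hxball⟩
  · have h1 : ∑ i, s (F.equivFin.symm i) ^ q = ∑ a : {x // x ∈ F}, s a.1 ^ q := by
      refine (Fintype.sum_equiv F.equivFin _ _ (fun a => ?_)).symm
      simp
    have h2 : ∑ a : {x // x ∈ F}, s a.1 ^ q = ∑ n ∈ F, s n ^ q :=
      Finset.sum_coe_sort F (fun n => s n ^ q)
    rw [h1, h2]
    exact hsum

noncomputable def cutoff1 (y : X) (s : ℝ) (x : X) : ℝ := min 1 (max 0 (dist x y / s - 1))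

noncomputable def cutoffg (n : ℕ) (y : Fin n → X) (s : Fin n → ℝ) :
    Option (Fin n) → X → ℝ :=
  fun j => j.elim 1 (fun i => cutoff1 (y i) (s i))

noncomputable def cutoff (n : ℕ) (y : Fin n → X) (s : Fin n → ℝ) (x : X) : ℝ :=
  (Finset.univ : Finset (Option (Fin n))).inf' ⟨none, Finset.mem_univ _⟩
    (fun j => cutoffg n y s j x)

lemma cutoff1_mem_Icc (y : X) (s : ℝ) (x : X) : cutoff1 y s x ∈ Set.Icc (0:ℝ) 1 :=
  ⟨le_min (by norm_num) (le_max_left _ _), min_le_left _ _⟩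

lemma cutoff1_lipschitz (y : X) {s : ℝ} (hs : 0 < s) :
    LipschitzWith (Real.toNNReal (1/s)) (cutoff1 y s) := by
  apply LipschitzWith.of_dist_le_mul
  intro a b
  have h1 : dist (cutoff1 y s a) (cutoff1 y s b) ≤ |dist a y / s - dist b y / s| := by
    rw [Real.dist_eq, cutoff1, cutoff1]
    refine le_trans (abs_min_sub_min_le_max _ _ _ _) ?_
    simp only [sub_self, abs_zero]
    refine max_le (by positivity) ?_
    refine le_trans (abs_max_sub_max_le_max _ _ _ _) ?_
    simp only [sub_self, abs_zero, sub_sub_sub_cancel_right]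
    exact max_le (by positivity) le_rfl
  refine le_trans h1 ?_
  rw [div_sub_div_same, abs_div, abs_of_pos hs, Real.coe_toNNReal _ (by positivity)]
  rw [div_le_iff₀ hs]
  have h2 : |dist a y - dist b y| ≤ dist a b := abs_dist_sub_le a b y
  have h3 : 1 / s * dist a b * s = dist a b := by field_simp
  rw [h3]
  exact h2

lemma cutoff1_eq_zero {y : X} {s : ℝ} (hs : 0 < s) {x : X} (h : dist x y ≤ s) :
    cutoff1 y s x = 0 := by
  have : dist x y / s - 1 ≤ 0 := by
    rw [sub_nonpos, div_le_one hs]; exact h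
  simp [cutoff1, max_eq_left this]

lemma cutoff1_eq_one {y : X} {s : ℝ} (hs : 0 < s) {x : X} (h : 2 * s ≤ dist x y) :
    cutoff1 y s x = 1 := by
  have h1 : (1:ℝ) ≤ dist x y / s - 1 := by
    rw [le_sub_iff_add_le, le_div_iff₀ hs]
    linarith
  have h0 : (0:ℝ) ≤ dist x y / s - 1 := by linarith
  simp only [cutoff1, max_eq_right h0, min_eq_left h1]

lemma cutoff1_lt_one {y : X} {s : ℝ} (hs : 0 < s) {x : X} (h : cutoff1 y s x < 1) :
    dist x y < 2 * s := by
  by_contra hcon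
  push_neg at hcon
  rw [cutoff1_eq_one hs hcon] at h
  exact lt_irrefl _ h

lemma cutoffg_mem_Icc (n : ℕ) (y : Fin n → X) (s : Fin n → ℝ) (j : Option (Fin n)) (x : X) :
    cutoffg n y s j x ∈ Set.Icc (0:ℝ) 1 := by
  cases j with
  | none =>
      refine ⟨?_, ?_⟩ <;> simp [cutoffg]
  | some i => exact cutoff1_mem_Icc _ _ _

lemma lipschitzWith_inf' {ι : Type*} (t : Finset ι) (ht : t.Nonempty) (g : ι → X → ℝ)
    (K : ℝ≥0) (hg : ∀ i ∈ t, LipschitzWith K (g i)) :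
    LipschitzWith K (fun x => t.inf' ht (fun i => g i x)) := by
  have key : ∀ u v : X, t.inf' ht (fun i => g i u) - t.inf' ht (fun i => g i v) ≤ K * dist u v := by
    intro u v
    obtain ⟨j, hjt, hjv⟩ := Finset.exists_mem_eq_inf' ht (fun i => g i v)
    have h1 : t.inf' ht (fun i => g i u) ≤ g j u := Finset.inf'_le _ hjt
    have h2 : g j u - g j v ≤ K * dist u v := by
      have h3 := (hg j hjt).dist_le_mul u v
      rw [Real.dist_eq] at h3
      have h4 := (abs_le.1 h3).2
      linarith
    rw [hjv]
    linarith
  apply LipschitzWith.of_dist_le_mul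
  intro u v
  rw [Real.dist_eq, abs_sub_le_iff]
  refine ⟨key u v, ?_⟩
  rw [dist_comm]
  exact key v u

lemma cutoff_le (n : ℕ) (y : Fin n → X) (s : Fin n → ℝ) (j : Option (Fin n)) (x : X) :
    cutoff n y s x ≤ cutoffg n y s j x :=
  Finset.inf'_le _ (Finset.mem_univ j)

lemma cutoff_mem_Icc (n : ℕ) (y : Fin n → X) (s : Fin n → ℝ) (x : X) :
    cutoff n y s x ∈ Set.Icc (0:ℝ) 1 := by
  constructor
  · exact Finset.le_inf' _ _ (fun j _ => (cutoffg_mem_Icc n y s j x).1)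
  · exact le_trans (cutoff_le n y s none x) le_rfl

noncomputable def cutoffK (n : ℕ) (s : Fin n → ℝ) : ℝ≥0 :=
  (Finset.univ : Finset (Option (Fin n))).sup
    (fun j => j.elim 0 (fun i => Real.toNNReal (1/s i)))

lemma cutoffg_lipschitz (n : ℕ) (y : Fin n → X) (s : Fin n → ℝ) (hs : ∀ i, 0 < s i)
    (j : Option (Fin n)) :
    LipschitzWith (j.elim 0 (fun i => Real.toNNReal (1/s i))) (cutoffg n y s j) := by
  cases j with
  | none => exact LipschitzWith.const' 1
  | some i => exact cutoff1_lipschitz _ (hs i)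

lemma cutoff_lipschitz (n : ℕ) (y : Fin n → X) (s : Fin n → ℝ) (hs : ∀ i, 0 < s i) :
    LipschitzWith (cutoffK n s) (cutoff n y s) := by
  apply lipschitzWith_inf'
  intro j _
  refine (cutoffg_lipschitz n y s hs j).weaken ?_
  simp only [cutoffK]
  exact Finset.le_sup (f := fun j : Option (Fin n) => j.elim 0 (fun i => Real.toNNReal (1/s i)))
    (Finset.mem_univ j)

lemma cutoff_eq_zero (n : ℕ) (y : Fin n → X) (s : Fin n → ℝ) (hs : ∀ i, 0 < s i)
    {x : X} {i : Fin n} (h : dist x (y i) ≤ s i) : cutoff n y s x = 0 := by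
  have h1 : cutoff n y s x ≤ 0 := by
    refine le_trans (cutoff_le n y s (some i) x) ?_
    exact le_of_eq (cutoff1_eq_zero (hs i) h)
  exact le_antisymm h1 (cutoff_mem_Icc n y s x).1

lemma cutoff_eq_one (n : ℕ) (y : Fin n → X) (s : Fin n → ℝ) (hs : ∀ i, 0 < s i)
    {x : X} (h : ∀ i, 2 * s i ≤ dist x (y i)) : cutoff n y s x = 1 := by
  refine le_antisymm (cutoff_le n y s none x) ?_
  refine Finset.le_inf' _ _ (fun j _ => ?_)
  cases j with
  | none => exact le_rfl
  | some i => exact le_of_eq (cutoff1_eq_one (hs i) (h i)).symm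

lemma cutoff_fderiv_bound (n : ℕ) (y : Fin n → X) (s : Fin n → ℝ) (hs : ∀ i, 0 < s i)
    (x : X) :
    fderiv ℝ (cutoff n y s) x = 0 ∨
      ∃ i, dist x (y i) < 2 * s i ∧ ‖fderiv ℝ (cutoff n y s) x‖ ≤ 1 / s i := by
  classical
  set η := cutoff n y s with hη
  by_cases hη1 : 1 ≤ η x
  · left
    have hmax : IsLocalMax η x := by
      apply Filter.Eventually.of_forall
      intro z
      exact le_trans (cutoff_mem_Icc n y s z).2 hη1
    exact hmax.fderiv_eq_zero
  · right
    push_neg at hη1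
    set g := cutoffg n y s with hg
    set J : Finset (Option (Fin n)) := Finset.univ.filter (fun j => g j x = η x) with hJ
    have hJne : J.Nonempty := by
      obtain ⟨j, _, hj⟩ := Finset.exists_mem_eq_inf'
        (⟨none, Finset.mem_univ _⟩ : (Finset.univ : Finset (Option (Fin n))).Nonempty)
        (fun j => g j x)
      exact ⟨j, Finset.mem_filter.2 ⟨Finset.mem_univ _, hj.symm⟩⟩
    have hnone : (none : Option (Fin n)) ∉ J := by
      simp only [hJ, Finset.mem_filter]
      rintro ⟨-, h⟩
      rw [show g none x = 1 from rfl] at h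
      exact absurd h.symm (ne_of_lt hη1)
    set Kf : Option (Fin n) → ℝ≥0 := fun j => j.elim 0 (fun i => Real.toNNReal (1/s i)) with hKf
    set KJ : ℝ≥0 := J.sup' hJne Kf with hKJ
    set m1 : X → ℝ := fun z => J.inf' hJne (fun j => g j z) with hm1
    have hm1lip : LipschitzWith KJ m1 := by
      apply lipschitzWith_inf'
      intro j hj
      exact (cutoffg_lipschitz n y s hs j).weaken (Finset.le_sup' Kf hj)
    have hm1x : m1 x = η x := by
      obtain ⟨j0, hj0⟩ := hJne
      refine le_antisymm ?_ ?_
      · refine le_trans (Finset.inf'_le _ hj0) ?_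
        exact le_of_eq (Finset.mem_filter.1 hj0).2
      · exact Finset.le_inf' _ _ (fun j hj => le_of_eq (Finset.mem_filter.1 hj).2.symm)
    have hloc : ∀ᶠ z in 𝓝 x, η z = m1 z := by
      have hcontg : ∀ j, Continuous (g j) := fun j =>
        ((cutoffg_lipschitz n y s hs j).continuous)
      have hcontm1 : Continuous m1 := hm1lip.continuous
      have hev : ∀ᶠ z in 𝓝 x, ∀ j ∈ (Finset.univ \ J : Finset (Option (Fin n))),
          m1 z < g j z := by
        rw [Finset.eventually_all]
        intro j hj
        have hjx : m1 x < g j x := by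
          rw [hm1x]
          rcases lt_or_eq_of_le (cutoff_le n y s j x : η x ≤ g j x) with h | h
          · exact h
          · exfalso
            have hjJ : j ∈ J := by
              rw [hJ]
              exact Finset.mem_filter.2 ⟨Finset.mem_univ j, h.symm⟩
            exact (Finset.mem_sdiff.1 hj).2 hjJ
        exact (isOpen_lt hcontm1 (hcontg j)).mem_nhds hjx
      filter_upwards [hev] with z hz
      refine le_antisymm ?_ ?_
      · exact Finset.le_inf' _ _ (fun j _ => Finset.inf'_le _ (Finset.mem_univ j))
      · refine Finset.le_inf' _ _ (fun j _ => ?_)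
        by_cases hjJ : j ∈ J
        · exact Finset.inf'_le _ hjJ
        · exact le_of_lt (hz j (Finset.mem_sdiff.2 ⟨Finset.mem_univ _, hjJ⟩))
    have hlipOn : LipschitzOnWith KJ η {z | η z = m1 z} := by
      intro a ha b hb
      simp only [Set.mem_setOf_eq] at ha hb
      rw [ha, hb]
      exact hm1lip a b
    have hbound : ‖fderiv ℝ η x‖ ≤ KJ :=
      norm_fderiv_le_of_lipschitzOn ℝ hloc hlipOn
    obtain ⟨j, hjJ, hjsup⟩ := Finset.exists_mem_eq_sup' hJne Kf
    cases j with
    | none => exact absurd hjJ hnone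
    | some i =>
        refine ⟨i, ?_, ?_⟩
        · have : g (some i) x = η x := (Finset.mem_filter.1 hjJ).2
          have h1 : cutoff1 (y i) (s i) x < 1 := by
            rw [show g (some i) x = cutoff1 (y i) (s i) x from rfl] at this
            rw [this]; exact hη1
          exact cutoff1_lt_one (hs i) h1
        · refine le_trans hbound ?_
          rw [hKJ, hjsup]
          simp only [hKf, Option.elim]
          exact le_of_eq (Real.coe_toNNReal _ (le_of_lt (one_div_pos.2 (hs i))))

lemma rpow_add_le2 {a b q : ℝ} (ha : 0 ≤ a) (hb : 0 ≤ b) (hq : 0 ≤ q) :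
    (a + b) ^ q ≤ 2 ^ q * (a ^ q + b ^ q) := by
  have h1 : a + b ≤ 2 * max a b := by
    rcases max_cases a b with ⟨h, h'⟩ | ⟨h, h'⟩ <;> rw [h] <;> linarith
  calc (a + b) ^ q ≤ (2 * max a b) ^ q :=
        Real.rpow_le_rpow (by positivity) h1 hq
    _ = 2 ^ q * max a b ^ q := Real.mul_rpow (by norm_num) (le_max_of_le_left ha)
    _ ≤ 2 ^ q * (a ^ q + b ^ q) := by
        have h2 := rpow_max_le (q := q) ha hb
        have h3 : (0:ℝ) ≤ 2 ^ q := Real.rpow_nonneg (by norm_num) q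
        nlinarith


/-- Removability of sets of vanishing `(d-p)`-Hausdorff measure for `W^{1,p} ∩ L^∞`
approximation: if `S ⊆ B̄₁` is compact with `H^{d-p}(S) = 0`, `1 ≤ p < d`, and `f` is a
bounded `W^{1,p}` function on `B₁`, then there are `[0,1]`-valued Lipschitz cutoffs `η_k`
vanishing near `S`, equal to `1` outside a `2ε_k`-neighborhood of `S` with `ε_k → 0`, such
that `f η_k → f` in `W^{1,p}(B₁)`. -/
theorem stmt_14 (d : ℕ) (hd : 2 ≤ d) (p : ℝ) (hp1 : 1 ≤ p) (hpd : p < d)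
    (S : Set (EuclideanSpace ℝ (Fin d))) (hScomp : IsCompact S)
    (hSsub : S ⊆ closedBall 0 1)
    (hS0 : MeasureTheory.Measure.hausdorffMeasure ((d : ℝ) - p) S = 0)
    (f : EuclideanSpace ℝ (Fin d) → ℝ) (C : ℝ) (hfb : ∀ x, |f x| ≤ C)
    (hfdiff : DifferentiableOn ℝ f (ball 0 1))
    (hfmem : MemLp f (ENNReal.ofReal p)
      (volume.restrict (ball (0 : EuclideanSpace ℝ (Fin d)) 1)))
    (hdfmem : MemLp (fun x => fderiv ℝ f x) (ENNReal.ofReal p)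
      (volume.restrict (ball (0 : EuclideanSpace ℝ (Fin d)) 1))) :
    ∃ (η : ℕ → EuclideanSpace ℝ (Fin d) → ℝ) (ε : ℕ → ℝ),
      (∀ k, ∃ K : NNReal, LipschitzWith K (η k)) ∧
      (∀ k x, η k x ∈ Set.Icc (0 : ℝ) 1) ∧
      (∀ k, ∃ U : Set (EuclideanSpace ℝ (Fin d)), IsOpen U ∧ S ⊆ U ∧ ∀ x ∈ U, η k x = 0) ∧
      (∀ k, 0 < ε k) ∧ Tendsto ε atTop (nhds 0) ∧
      (∀ k, ∀ x ∉ Metric.thickening (2 * ε k) S, η k x = 1) ∧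
      Tendsto (fun k => ∫ x in ball (0 : EuclideanSpace ℝ (Fin d)) 1,
        (|f x * η k x - f x| ^ p +
          ‖fderiv ℝ (fun y => f y * η k y) x - fderiv ℝ f x‖ ^ p))
        atTop (nhds 0) := by
  classical
  have hp0 : (0:ℝ) < p := lt_of_lt_of_le one_pos hp1
  have hpd' : (p:ℝ) < (d:ℝ) := hpd
  have hq : (0:ℝ) < (d:ℝ) - p := by linarith
  have hC0 : 0 ≤ C := le_trans (abs_nonneg _) (hfb 0)
  set ε : ℕ → ℝ := fun k => 1 / (k + 1) with hε
  have hεpos : ∀ k, 0 < ε k := fun k => by positivity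
  have hεle : ∀ k, ε k ≤ 1 := fun k => by
    rw [hε]
    rw [div_le_one (by positivity)]
    simp
  have hεtend : Tendsto ε atTop (𝓝 0) := tendsto_one_div_add_atTop_nhds_zero_nat
  have hcover := fun k => exists_cover ((d:ℝ) - p) hq S hScomp hS0 (hεpos k) (hεpos k)
  choose n y s hspos hslt hyS hcov hsum using hcover
  set η : ℕ → EuclideanSpace ℝ (Fin d) → ℝ := fun k => cutoff (n k) (y k) (s k) with hηdef
  refine ⟨η, ε, ?_, ?_, ?_, hεpos, hεtend, ?_, ?_⟩
  · exact fun k => ⟨cutoffK (n k) (s k), cutoff_lipschitz _ _ _ (hspos k)⟩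
  · exact fun k x => cutoff_mem_Icc _ _ _ x
  · intro k
    refine ⟨⋃ i, ball (y k i) (s k i), isOpen_iUnion (fun i => isOpen_ball), hcov k, ?_⟩
    intro x hx
    obtain ⟨i, hi⟩ := Set.mem_iUnion.1 hx
    exact cutoff_eq_zero _ _ _ (hspos k) (le_of_lt (mem_ball.1 hi))
  · intro k x hx
    refine cutoff_eq_one _ _ _ (hspos k) (fun i => ?_)
    by_contra hcon
    push_neg at hcon
    apply hx
    rw [Metric.mem_thickening_iff]
    exact ⟨y k i, hyS k i, by nlinarith [hslt k i, hspos k i]⟩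
  -- the main convergence
  set B := ball (0 : EuclideanSpace ℝ (Fin d)) 1 with hBdef
  set μB := volume.restrict B with hμB
  set V : ℝ≥0∞ := volume (ball (0 : EuclideanSpace ℝ (Fin d)) 1) with hV
  have hVfin : V ≠ ⊤ := measure_ball_lt_top.ne
  set A : ℕ → Set (EuclideanSpace ℝ (Fin d)) :=
    fun k => ⋃ i, closedBall (y k i) (2 * s k i) with hA
  have hAmeas : ∀ k, MeasurableSet (A k) :=
    fun k => MeasurableSet.iUnion (fun i => measurableSet_closedBall)
  have hAclosed : ∀ k, IsClosed (A k) :=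
    fun k => isClosed_iUnion_of_finite (fun i => Metric.isClosed_closedBall)
  have hsle1 : ∀ k i, s k i ≤ 1 := fun k i => le_trans (hslt k i).le (hεle k)
  have hsq : ∀ k i, (s k i : ℝ) ^ (d : ℕ) ≤ s k i ^ ((d:ℝ) - p) := by
    intro k i
    rw [← Real.rpow_natCast (s k i) d]
    exact Real.rpow_le_rpow_of_exponent_ge (hspos k i) (hsle1 k i) (by linarith)
  have hCB : ∀ k i, volume (closedBall (y k i) (2 * s k i)) =
      ENNReal.ofReal ((2 * s k i) ^ (d:ℕ)) * V := by
    intro k i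
    rw [MeasureTheory.Measure.addHaar_closedBall _ _ (mul_nonneg (by norm_num) (hspos k i).le : (0:ℝ) ≤ 2 * s k i)]
    rw [finrank_euclideanSpace_fin]
  have hsumCB : ∀ k, ∑ i, volume (closedBall (y k i) (2 * s k i)) ≤
      ENNReal.ofReal (2 ^ (d:ℕ) * ε k) * V := by
    intro k
    have h1 : ∀ i, (2 * s k i) ^ (d:ℕ) = 2 ^ (d:ℕ) * s k i ^ (d:ℕ) := fun i => mul_pow 2 _ d
    calc ∑ i, volume (closedBall (y k i) (2 * s k i))
        = ∑ i, ENNReal.ofReal ((2 * s k i) ^ (d:ℕ)) * V := Finset.sum_congr rfl (fun i _ => hCB k i)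
      _ = (∑ i, ENNReal.ofReal ((2 * s k i) ^ (d:ℕ))) * V := by rw [Finset.sum_mul]
      _ ≤ ENNReal.ofReal (2 ^ (d:ℕ) * ε k) * V := by
          refine mul_le_mul_left ?_ V
          rw [← ENNReal.ofReal_sum_of_nonneg
            (fun i _ => pow_nonneg (mul_nonneg (by norm_num) (hspos k i).le) d)]
          refine ENNReal.ofReal_le_ofReal ?_
          calc ∑ i, (2 * s k i) ^ (d:ℕ) = ∑ i, 2 ^ (d:ℕ) * s k i ^ (d:ℕ) :=
                Finset.sum_congr rfl (fun i _ => h1 i)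
            _ ≤ ∑ i, 2 ^ (d:ℕ) * s k i ^ ((d:ℝ) - p) := by
                refine Finset.sum_le_sum (fun i _ => ?_)
                have := hsq k i
                have h2 : (0:ℝ) ≤ 2 ^ (d:ℕ) := by positivity
                nlinarith
            _ = 2 ^ (d:ℕ) * ∑ i, s k i ^ ((d:ℝ) - p) := by rw [Finset.mul_sum]
            _ ≤ 2 ^ (d:ℕ) * ε k := by
                have := hsum k
                have h2 : (0:ℝ) ≤ 2 ^ (d:ℕ) := by positivity
                nlinarith
  have hvolA : ∀ k, volume (A k) ≤ ENNReal.ofReal (2 ^ (d:ℕ) * ε k) * V := by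
    intro k
    refine le_trans ?_ (hsumCB k)
    rw [hA]
    exact measure_iUnion_fintype_le _ _
  have hμBA : ∀ k, μB (A k) ≤ ENNReal.ofReal (2 ^ (d:ℕ) * ε k) * V := by
    intro k
    refine le_trans ?_ (hvolA k)
    rw [hμB, Measure.restrict_apply (hAmeas k)]
    exact measure_mono Set.inter_subset_left
  -- finiteness of ∫ |Df|^p
  have hDfint : ∫⁻ x, ENNReal.ofReal (‖fderiv ℝ f x‖ ^ p) ∂μB ≠ ⊤ := by
    have h1 := hdfmem.integrable_norm_rpow (by simp [hp0]) ENNReal.ofReal_ne_top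
    rw [ENNReal.toReal_ofReal hp0.le] at h1
    have h2 := h1.hasFiniteIntegral
    rw [hasFiniteIntegral_iff_ofReal (Filter.Eventually.of_forall
      (fun x => Real.rpow_nonneg (norm_nonneg _) p))] at h2
    exact h2.ne
  -- Rademacher
  have hηdiff : ∀ k, ∀ᵐ x ∂(volume : Measure (EuclideanSpace ℝ (Fin d))),
      DifferentiableAt ℝ (η k) x :=
    fun k => (cutoff_lipschitz _ _ _ (hspos k)).ae_differentiableAt
  -- the dominating function
  set G : ℕ → EuclideanSpace ℝ (Fin d) → ℝ≥0∞ := fun k x =>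
    (A k).indicator (fun _ => ENNReal.ofReal (C ^ p)) x
    + ENNReal.ofReal (2 ^ p) * (ENNReal.ofReal (C ^ p) *
        (∑ i, (closedBall (y k i) (2 * s k i)).indicator
          (fun _ => ENNReal.ofReal ((1 / s k i) ^ p)) x)
      + (A k).indicator (fun z => ENNReal.ofReal (‖fderiv ℝ f z‖ ^ p)) x) with hG
  -- pointwise bound
  have hpt : ∀ k, ∀ᵐ x ∂μB, ENNReal.ofReal (|f x * η k x - f x| ^ p +
      ‖fderiv ℝ (fun y' => f y' * η k y') x - fderiv ℝ f x‖ ^ p) ≤ G k x := by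
    intro k
    filter_upwards [ae_restrict_mem measurableSet_ball, ae_restrict_of_ae (hηdiff k)]
      with x hxB hηd
    by_cases hA' : x ∈ A k
    · have hfd : DifferentiableAt ℝ f x := hfdiff.differentiableAt (isOpen_ball.mem_nhds hxB)
      have hIcc := cutoff_mem_Icc (n k) (y k) (s k) x
      have hIcc1 : 0 ≤ η k x := hIcc.1
      have hIcc2 : η k x ≤ 1 := hIcc.2
      have hb1 : |f x * η k x - f x| ^ p ≤ C ^ p := by
        have h1 : |f x * η k x - f x| = |f x| * |η k x - 1| := by
          rw [← abs_mul]
          ring_nf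
        have h2 : |η k x - 1| ≤ 1 := abs_le.2 ⟨by linarith, by linarith⟩
        have h3 : |f x * η k x - f x| ≤ C := by
          rw [h1]
          calc |f x| * |η k x - 1| ≤ C * 1 :=
                mul_le_mul (hfb x) h2 (abs_nonneg _) hC0
            _ = C := mul_one C
        exact Real.rpow_le_rpow (abs_nonneg _) h3 hp0.le
      set R : ℝ := ∑ i, (closedBall (y k i) (2 * s k i)).indicator
        (fun _ => (1 / s k i) ^ p) x with hR
      have hindnn : ∀ i (z : EuclideanSpace ℝ (Fin d)),
          0 ≤ (closedBall (y k i) (2 * s k i)).indicator (fun _ => (1 / s k i) ^ p) z :=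
        fun i z => Set.indicator_nonneg (fun _ _ => Real.rpow_nonneg (one_div_nonneg.2 (hspos k i).le) p) z
      have hR0 : 0 ≤ R := Finset.sum_nonneg fun i _ => hindnn i x
      have hgrad : ‖fderiv ℝ (η k) x‖ ^ p ≤ R := by
        rcases cutoff_fderiv_bound (n k) (y k) (s k) (hspos k) x with h0 | ⟨i, hdist, hle⟩
        · have h0' : fderiv ℝ (η k) x = 0 := h0
          rw [h0', norm_zero, Real.zero_rpow hp0.ne']
          exact hR0
        · have hle' : ‖fderiv ℝ (η k) x‖ ≤ 1 / s k i := hle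
          have h1 : ‖fderiv ℝ (η k) x‖ ^ p ≤ (1 / s k i) ^ p :=
            Real.rpow_le_rpow (norm_nonneg _) hle' hp0.le
          refine le_trans h1 ?_
          have hxi : x ∈ closedBall (y k i) (2 * s k i) := mem_closedBall.2 hdist.le
          calc (1 / s k i) ^ p
              = (closedBall (y k i) (2 * s k i)).indicator (fun _ => (1 / s k i) ^ p) x := by
                rw [Set.indicator_of_mem hxi]
            _ ≤ R := Finset.single_le_sum (fun j _ => hindnn j x) (Finset.mem_univ i)
      have hb2 : ‖fderiv ℝ (fun y' => f y' * η k y') x - fderiv ℝ f x‖ ^ p ≤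
          2 ^ p * (C ^ p * R + ‖fderiv ℝ f x‖ ^ p) := by
        have hdm : fderiv ℝ (fun y' => f y' * η k y') x =
            f x • fderiv ℝ (η k) x + η k x • fderiv ℝ f x := fderiv_mul hfd hηd
        have heq : fderiv ℝ (fun y' => f y' * η k y') x - fderiv ℝ f x =
            f x • fderiv ℝ (η k) x + (η k x - 1) • fderiv ℝ f x := by
          rw [hdm, sub_smul, one_smul]
          abel
        have hn1 : ‖fderiv ℝ (fun y' => f y' * η k y') x - fderiv ℝ f x‖ ≤
            C * ‖fderiv ℝ (η k) x‖ + ‖fderiv ℝ f x‖ := by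
          rw [heq]
          refine le_trans (norm_add_le _ _) ?_
          rw [norm_smul, norm_smul, Real.norm_eq_abs, Real.norm_eq_abs]
          have h2 : |η k x - 1| ≤ 1 := abs_le.2 ⟨by linarith, by linarith⟩
          have h4 : |f x| * ‖fderiv ℝ (η k) x‖ ≤ C * ‖fderiv ℝ (η k) x‖ :=
            mul_le_mul_of_nonneg_right (hfb x) (norm_nonneg _)
          have h5 : |η k x - 1| * ‖fderiv ℝ f x‖ ≤ 1 * ‖fderiv ℝ f x‖ :=
            mul_le_mul_of_nonneg_right h2 (norm_nonneg _)
          rw [one_mul] at h5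
          linarith
        calc ‖fderiv ℝ (fun y' => f y' * η k y') x - fderiv ℝ f x‖ ^ p
            ≤ (C * ‖fderiv ℝ (η k) x‖ + ‖fderiv ℝ f x‖) ^ p :=
              Real.rpow_le_rpow (norm_nonneg _) hn1 hp0.le
          _ ≤ 2 ^ p * ((C * ‖fderiv ℝ (η k) x‖) ^ p + ‖fderiv ℝ f x‖ ^ p) :=
              rpow_add_le2 (by positivity) (norm_nonneg _) hp0.le
          _ = 2 ^ p * (C ^ p * ‖fderiv ℝ (η k) x‖ ^ p + ‖fderiv ℝ f x‖ ^ p) := by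
              rw [Real.mul_rpow hC0 (norm_nonneg _)]
          _ ≤ 2 ^ p * (C ^ p * R + ‖fderiv ℝ f x‖ ^ p) := by
              have h7 : (0:ℝ) ≤ 2 ^ p := Real.rpow_nonneg (by norm_num) p
              have h8 : (0:ℝ) ≤ C ^ p := Real.rpow_nonneg hC0 p
              have h9 : C ^ p * ‖fderiv ℝ (η k) x‖ ^ p ≤ C ^ p * R :=
                mul_le_mul_of_nonneg_left hgrad h8
              have h10 : C ^ p * ‖fderiv ℝ (η k) x‖ ^ p + ‖fderiv ℝ f x‖ ^ p ≤
                  C ^ p * R + ‖fderiv ℝ f x‖ ^ p := add_le_add_left h9 _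
              exact mul_le_mul_of_nonneg_left h10 h7
      have hW : |f x * η k x - f x| ^ p +
          ‖fderiv ℝ (fun y' => f y' * η k y') x - fderiv ℝ f x‖ ^ p ≤
          C ^ p + 2 ^ p * (C ^ p * R + ‖fderiv ℝ f x‖ ^ p) := add_le_add hb1 hb2
      refine le_trans (ENNReal.ofReal_le_ofReal hW) ?_
      have hRof : ENNReal.ofReal R = ∑ i, (closedBall (y k i) (2 * s k i)).indicator
          (fun _ => ENNReal.ofReal ((1 / s k i) ^ p)) x := by
        rw [hR, ENNReal.ofReal_sum_of_nonneg (fun i _ => hindnn i x)]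
        refine Finset.sum_congr rfl (fun i _ => ?_)
        by_cases hxi : x ∈ closedBall (y k i) (2 * s k i)
        · rw [Set.indicator_of_mem hxi, Set.indicator_of_mem hxi]
        · rw [Set.indicator_of_notMem hxi, Set.indicator_of_notMem hxi, ENNReal.ofReal_zero]
      have hCp0 : (0:ℝ) ≤ C ^ p := Real.rpow_nonneg hC0 p
      have h2p0 : (0:ℝ) ≤ 2 ^ p := Real.rpow_nonneg (by norm_num) p
      have hDf0 : (0:ℝ) ≤ ‖fderiv ℝ f x‖ ^ p := Real.rpow_nonneg (norm_nonneg _) p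
      rw [hG]
      simp only [Set.indicator_of_mem hA']
      rw [ENNReal.ofReal_add hCp0 (by positivity),
        ENNReal.ofReal_mul h2p0,
        ENNReal.ofReal_add (by positivity) hDf0,
        ENNReal.ofReal_mul hCp0, hRof]
    · -- off A k : integrand vanishes
      have hnb : (A k)ᶜ ∈ 𝓝 x := ((hAclosed k).isOpen_compl).mem_nhds hA'
      have hone : ∀ z ∈ (A k)ᶜ, η k z = 1 := by
        intro z hz
        refine cutoff_eq_one _ _ _ (hspos k) (fun i => ?_)
        by_contra hcon
        push_neg at hcon
        exact hz (Set.mem_iUnion.2 ⟨i, mem_closedBall.2 hcon.le⟩)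
      have hfeq : (fun y' => f y' * η k y') =ᶠ[𝓝 x] f := by
        filter_upwards [hnb] with z hz
        rw [hone z hz, mul_one]
      have hdeq : fderiv ℝ (fun y' => f y' * η k y') x = fderiv ℝ f x := hfeq.fderiv_eq
      have hx1 : η k x = 1 := hone x hA'
      rw [hdeq, hx1, mul_one, sub_self, sub_self, abs_zero, norm_zero,
        Real.zero_rpow hp0.ne', add_zero, ENNReal.ofReal_zero]
      exact zero_le
  -- measurability of the integrand
  have hrpC : Continuous (fun t : ℝ => t ^ p) := by
    rw [continuous_iff_continuousAt]
    exact fun t => Real.continuousAt_rpow_const t p (Or.inr hp0.le)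
  have hFmeas : ∀ k, AEStronglyMeasurable (fun x => |f x * η k x - f x| ^ p +
      ‖fderiv ℝ (fun y' => f y' * η k y') x - fderiv ℝ f x‖ ^ p) μB := by
    intro k
    have hfm : AEStronglyMeasurable f μB := hfmem.aestronglyMeasurable
    have hηm : AEStronglyMeasurable (η k) μB :=
      (cutoff_lipschitz _ _ _ (hspos k)).continuous.aestronglyMeasurable
    have h1 : AEStronglyMeasurable (fun x => f x * η k x - f x) μB := (hfm.mul hηm).sub hfm
    have h2 : AEStronglyMeasurable (fun x => |f x * η k x - f x| ^ p) μB := by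
      have h2' : (fun x => |f x * η k x - f x| ^ p) =
          fun x => ‖f x * η k x - f x‖ ^ p := by
        funext z
        rw [Real.norm_eq_abs]
      rw [h2']
      exact hrpC.comp_aestronglyMeasurable h1.norm
    have h3 : AEStronglyMeasurable
        (fun x => fderiv ℝ (fun y' => f y' * η k y') x - fderiv ℝ f x) μB :=
      (((measurable_fderiv ℝ _).sub (measurable_fderiv ℝ f))).aestronglyMeasurable
    exact h2.add (hrpC.comp_aestronglyMeasurable h3.norm)
  -- bound the lintegral of G
  set J : ℕ → ℝ≥0∞ := fun k => ∫⁻ x in A k, ENNReal.ofReal (‖fderiv ℝ f x‖ ^ p) ∂μB with hJ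
  have hJle : ∀ k, J k ≤ ∫⁻ x, ENNReal.ofReal (‖fderiv ℝ f x‖ ^ p) ∂μB := by
    intro k
    rw [hJ]
    exact setLIntegral_le_lintegral _ _
  have hDfmeasE : Measurable (fun z => ENNReal.ofReal (‖fderiv ℝ f z‖ ^ p)) :=
    ENNReal.measurable_ofReal.comp (hrpC.measurable.comp ((measurable_fderiv ℝ f).norm))
  have hGint : ∀ k, ∫⁻ x, G k x ∂μB ≤
      ENNReal.ofReal (C ^ p) * (ENNReal.ofReal (2 ^ (d:ℕ) * ε k) * V)
      + ENNReal.ofReal (2 ^ p) * (ENNReal.ofReal (C ^ p) *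
          (ENNReal.ofReal (2 ^ (d:ℕ) * ε k) * V) + J k) := by
    intro k
    have hm1 : Measurable ((A k).indicator
        (fun _ : EuclideanSpace ℝ (Fin d) => ENNReal.ofReal (C ^ p))) :=
      measurable_const.indicator (hAmeas k)
    rw [hG]
    rw [lintegral_add_left hm1]
    refine add_le_add ?_ ?_
    · rw [lintegral_indicator (hAmeas k), setLIntegral_const]
      exact mul_le_mul_right (hμBA k) _
    · rw [lintegral_const_mul' _ _ ENNReal.ofReal_ne_top]
      refine mul_le_mul_right ?_ _
      have hmsum : Measurable (fun x => ENNReal.ofReal (C ^ p) *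
          (∑ i, (closedBall (y k i) (2 * s k i)).indicator
            (fun _ => ENNReal.ofReal ((1 / s k i) ^ p)) x)) := by
        refine Measurable.const_mul ?_ _
        refine Finset.measurable_sum _ (fun i _ => ?_)
        exact measurable_const.indicator measurableSet_closedBall
      rw [lintegral_add_left hmsum]
      refine add_le_add ?_ ?_
      · rw [lintegral_const_mul' _ _ ENNReal.ofReal_ne_top]
        refine mul_le_mul_right ?_ _
        rw [lintegral_finset_sum _ (fun i _ =>
          measurable_const.indicator measurableSet_closedBall)]
        calc ∑ i, ∫⁻ x, (closedBall (y k i) (2 * s k i)).indicator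
              (fun _ => ENNReal.ofReal ((1 / s k i) ^ p)) x ∂μB
            = ∑ i, ENNReal.ofReal ((1 / s k i) ^ p) * μB (closedBall (y k i) (2 * s k i)) := by
              refine Finset.sum_congr rfl (fun i _ => ?_)
              rw [lintegral_indicator measurableSet_closedBall, setLIntegral_const]
          _ ≤ ∑ i, ENNReal.ofReal ((1 / s k i) ^ p) * volume (closedBall (y k i) (2 * s k i)) := by
              refine Finset.sum_le_sum (fun i _ => ?_)
              refine mul_le_mul_right ?_ _
              rw [hμB]
              exact Measure.restrict_le_self _
          _ = ∑ i, ENNReal.ofReal ((1 / s k i) ^ p * (2 * s k i) ^ (d:ℕ)) * V := by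
              refine Finset.sum_congr rfl (fun i _ => ?_)
              rw [hCB k i, ← mul_assoc, ← ENNReal.ofReal_mul (Real.rpow_nonneg (one_div_nonneg.2 (hspos k i).le) p)]
          _ ≤ ENNReal.ofReal (2 ^ (d:ℕ) * ε k) * V := by
              rw [← Finset.sum_mul]
              refine mul_le_mul_left ?_ V
              rw [← ENNReal.ofReal_sum_of_nonneg (fun i _ => mul_nonneg
                (Real.rpow_nonneg (one_div_nonneg.2 (hspos k i).le) p)
                (pow_nonneg (mul_nonneg (by norm_num) (hspos k i).le) d))]
              refine ENNReal.ofReal_le_ofReal ?_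
              have hterm : ∀ i, (1 / s k i) ^ p * (2 * s k i) ^ (d:ℕ) =
                  2 ^ (d:ℕ) * s k i ^ ((d:ℝ) - p) := by
                intro i
                have hsp : (0:ℝ) < s k i ^ p := Real.rpow_pos_of_pos (hspos k i) p
                rw [mul_pow, one_div, Real.inv_rpow (hspos k i).le,
                  ← Real.rpow_natCast (s k i) d]
                have hsplit : (d:ℝ) = p + ((d:ℝ) - p) := by ring
                rw [hsplit, Real.rpow_add (hspos k i)]
                field_simp
                ring
              calc ∑ i, (1 / s k i) ^ p * (2 * s k i) ^ (d:ℕ)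
                  = ∑ i, 2 ^ (d:ℕ) * s k i ^ ((d:ℝ) - p) :=
                    Finset.sum_congr rfl (fun i _ => hterm i)
                _ = 2 ^ (d:ℕ) * ∑ i, s k i ^ ((d:ℝ) - p) := by rw [Finset.mul_sum]
                _ ≤ 2 ^ (d:ℕ) * ε k := by
                    have := hsum k
                    have h2 : (0:ℝ) ≤ 2 ^ (d:ℕ) := by positivity
                    nlinarith
      · rw [lintegral_indicator (hAmeas k)]
  -- the final upper bound Ψ and its convergence
  set Ψ : ℕ → ℝ≥0∞ := fun k =>
    ENNReal.ofReal (C ^ p) * (ENNReal.ofReal (2 ^ (d:ℕ) * ε k) * V)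
    + ENNReal.ofReal (2 ^ p) * (ENNReal.ofReal (C ^ p) *
        (ENNReal.ofReal (2 ^ (d:ℕ) * ε k) * V) + J k) with hΨ
  have hΨfin : ∀ k, Ψ k ≠ ⊤ := by
    intro k
    rw [hΨ]
    refine ENNReal.add_ne_top.2 ⟨?_, ?_⟩
    · exact ENNReal.mul_ne_top ENNReal.ofReal_ne_top
        (ENNReal.mul_ne_top ENNReal.ofReal_ne_top hVfin)
    · refine ENNReal.mul_ne_top ENNReal.ofReal_ne_top ?_
      refine ENNReal.add_ne_top.2 ⟨?_, ?_⟩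
      · exact ENNReal.mul_ne_top ENNReal.ofReal_ne_top
          (ENNReal.mul_ne_top ENNReal.ofReal_ne_top hVfin)
      · exact ne_top_of_le_ne_top hDfint (hJle k)
  have hεEtend : Tendsto (fun k => ENNReal.ofReal (2 ^ (d:ℕ) * ε k) * V) atTop (𝓝 0) := by
    have h1 : Tendsto (fun k => (2:ℝ) ^ (d:ℕ) * ε k) atTop (𝓝 0) := by
      have h1' := hεtend.const_mul ((2:ℝ) ^ (d:ℕ))
      rw [mul_zero] at h1'
      exact h1'
    have h2 : Tendsto (fun k => ENNReal.ofReal (2 ^ (d:ℕ) * ε k)) atTop (𝓝 0) := by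
      have := (ENNReal.continuous_ofReal.tendsto 0).comp h1
      rw [ENNReal.ofReal_zero] at this; exact this
    have h3 := ENNReal.Tendsto.mul_const h2 (Or.inr hVfin)
    simpa using h3
  have hμBAtend : Tendsto (fun k => μB (A k)) atTop (𝓝 0) := by
    refine tendsto_of_tendsto_of_tendsto_of_le_of_le tendsto_const_nhds hεEtend
      (fun k => zero_le) (fun k => hμBA k)
  have hJtend : Tendsto J atTop (𝓝 0) :=
    tendsto_setLIntegral_zero hDfint hμBAtend
  have hΨtend : Tendsto Ψ atTop (𝓝 0) := by
    rw [hΨ]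
    have h1 : Tendsto (fun k => ENNReal.ofReal (C ^ p) *
        (ENNReal.ofReal (2 ^ (d:ℕ) * ε k) * V)) atTop (𝓝 0) := by
      have := ENNReal.Tendsto.const_mul hεEtend
        (Or.inr (ENNReal.ofReal_ne_top : ENNReal.ofReal (C ^ p) ≠ ⊤))
      simpa using this
    have h2 : Tendsto (fun k => ENNReal.ofReal (2 ^ p) * (ENNReal.ofReal (C ^ p) *
        (ENNReal.ofReal (2 ^ (d:ℕ) * ε k) * V) + J k)) atTop (𝓝 0) := by
      have h3 : Tendsto (fun k => ENNReal.ofReal (C ^ p) *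
          (ENNReal.ofReal (2 ^ (d:ℕ) * ε k) * V) + J k) atTop (𝓝 0) := by
        have := h1.add hJtend
        simpa using this
      have := ENNReal.Tendsto.const_mul h3
        (Or.inr (ENNReal.ofReal_ne_top : ENNReal.ofReal (2 ^ p) ≠ ⊤))
      simpa using this
    have := h1.add h2
    simpa using this
  -- put everything together
  have hint_eq : ∀ k, ∫ x in ball (0 : EuclideanSpace ℝ (Fin d)) 1,
      (|f x * η k x - f x| ^ p +
        ‖fderiv ℝ (fun y' => f y' * η k y') x - fderiv ℝ f x‖ ^ p) =
      (∫⁻ x, ENNReal.ofReal (|f x * η k x - f x| ^ p +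
        ‖fderiv ℝ (fun y' => f y' * η k y') x - fderiv ℝ f x‖ ^ p) ∂μB).toReal := by
    intro k
    rw [hμB, hBdef]
    exact integral_eq_lintegral_of_nonneg_ae
      (Filter.Eventually.of_forall (fun x => by positivity)) (hFmeas k)
  have hbound : ∀ k, ∫ x in ball (0 : EuclideanSpace ℝ (Fin d)) 1,
      (|f x * η k x - f x| ^ p +
        ‖fderiv ℝ (fun y' => f y' * η k y') x - fderiv ℝ f x‖ ^ p) ≤ (Ψ k).toReal := by
    intro k
    rw [hint_eq k]
    refine ENNReal.toReal_mono (hΨfin k) ?_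
    refine le_trans (lintegral_mono_ae (hpt k)) ?_
    exact le_trans (hGint k) (le_of_eq rfl)
  have hnn : ∀ k, 0 ≤ ∫ x in ball (0 : EuclideanSpace ℝ (Fin d)) 1,
      (|f x * η k x - f x| ^ p +
        ‖fderiv ℝ (fun y' => f y' * η k y') x - fderiv ℝ f x‖ ^ p) := by
    intro k
    refine integral_nonneg (fun x => by positivity)
  have hΨtoReal : Tendsto (fun k => (Ψ k).toReal) atTop (𝓝 0) := by
    have := (ENNReal.tendsto_toReal (by simp : (0:ℝ≥0∞) ≠ ⊤)).comp hΨtend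
    rw [ENNReal.toReal_zero] at this; exact this
  exact tendsto_of_tendsto_of_tendsto_of_le_of_le tendsto_const_nhds hΨtoReal hnn hbound
end
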